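/- arXiv:2103.09925 — 7 statements merged into one kernel-verified Lean document; each statement's English description precedes it below -/
import Mathlib

section
/- For any nonnegative reals a_{n,l} (n ∈ D, l ∈ {0,...,K}) satisfying the popularity-first ordering a_{φ(i),l} ≥ a_{φ(i+1),l} for all l ∈ {1,...,K} and 1 ≤ i < |D|, the maximum over all bijections π : {1,...,|D|} → D of Σ_{l=0}^{K-1} Σ_{i=1}^{|D|} binom(K-i, l) a_{π(i),l} is attained at π = φ, i.e., equals Σ_{l=0}^{K-1} Σ_{i=1}^{|D|} binom(K-i, l) a_{φ(i),l}. -/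
open Finset Equiv

/-- Under the popularity-first ordering, the maximum over all bijections `π : {1,...,|D|} → D`
of `∑_{l=0}^{K-1} ∑_{i=1}^{|D|} C(K-i,l) a_{π(i),l}` is attained at the popularity-order
bijection `φ`. -/
theorem lb_max_attained_at_popularity_first (K : ℕ) (D : Finset ℕ) (hD : D.card ≤ K)
    (hDne : D.Nonempty) (a : ℕ → ℕ → ℝ)
    (ha : ∀ n ∈ D, ∀ l ≤ K, 0 ≤ a n l)
    (φ : ℕ → ℕ) (hφ : Set.BijOn φ (Finset.Icc 1 D.card : Set ℕ) (D : Set ℕ))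
    (hpf : ∀ l ∈ Finset.Icc 1 K, ∀ i, 1 ≤ i → i < D.card → a (φ (i + 1)) l ≤ a (φ i) l)
    (π : ℕ → ℕ) (hπ : Set.BijOn π (Finset.Icc 1 D.card : Set ℕ) (D : Set ℕ)) :
    ∑ l ∈ Finset.range K, ∑ i ∈ Finset.Icc 1 D.card,
        (Nat.choose (K - i) l : ℝ) * a (π i) l
      ≤ ∑ l ∈ Finset.range K, ∑ i ∈ Finset.Icc 1 D.card,
        (Nat.choose (K - i) l : ℝ) * a (φ i) l := by
  classical
  set s : Finset ℕ := Finset.Icc 1 D.card with hs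
  -- Build the permutation σ of ℕ supported on s with π = φ ∘ σ on s
  let eπ : ((s : Set ℕ)) ≃ (D : Set ℕ) := Set.BijOn.equiv π hπ
  let eφ : ((s : Set ℕ)) ≃ (D : Set ℕ) := Set.BijOn.equiv φ hφ
  let σ0 : Equiv.Perm ((s : Set ℕ)) := eπ.trans eφ.symm
  let σ : Equiv.Perm ℕ := σ0.extendDomain (Equiv.refl _)
  have hσsupp : {x | σ x ≠ x} ⊆ (s : Set ℕ) := by
    intro x hx
    by_contra hxs
    exact hx (σ0.extendDomain_apply_not_subtype (Equiv.refl _) hxs)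
  have hφeφ : ∀ z : ((s : Set ℕ)), φ (z : ℕ) = ((eφ z : (D : Set ℕ)) : ℕ) := fun z => rfl
  have hcomp : ∀ x ∈ s, π x = φ (σ x) := by
    intro x hx
    have hx' : x ∈ (s : Set ℕ) := by exact_mod_cast hx
    have h1 : σ x = ((σ0 ⟨x, hx'⟩ : ((s : Set ℕ))) : ℕ) :=
      σ0.extendDomain_apply_subtype (Equiv.refl _) hx'
    rw [h1, hφeφ]
    have : eφ (σ0 ⟨x, hx'⟩) = eπ ⟨x, hx'⟩ := by
      exact eφ.apply_symm_apply _
    rw [this]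
    rfl
  -- Antitonicity of a (φ ·) l on s for l ≥ 1
  have hanti : ∀ l, 1 ≤ l → l ≤ K → ∀ i j, 1 ≤ i → i ≤ j → j ≤ D.card →
      a (φ j) l ≤ a (φ i) l := by
    intro l hl1 hlK i j hi hij hj
    induction j with
    | zero => omega
    | succ m ih =>
      rcases Nat.lt_or_ge i (m + 1) with h | h
      · have him : i ≤ m := by omega
        have h1m : 1 ≤ m := by omega
        calc a (φ (m + 1)) l ≤ a (φ m) l :=
              hpf l (Finset.mem_Icc.mpr ⟨hl1, hlK⟩) m h1m (by omega)
          _ ≤ a (φ i) l := ih him (by omega)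
      · have : i = m + 1 := by omega
        subst this; exact le_refl _
  refine Finset.sum_le_sum ?_
  intro l hl
  have hlK : l < K := Finset.mem_range.mp hl
  -- rewrite LHS inner sum using σ
  have hrw : ∑ i ∈ s, (Nat.choose (K - i) l : ℝ) * a (π i) l
      = ∑ i ∈ s, (Nat.choose (K - i) l : ℝ) * a (φ (σ i)) l := by
    apply Finset.sum_congr rfl
    intro i hi
    rw [hcomp i hi]
  rw [hrw]
  have hmono : MonovaryOn (fun i => (Nat.choose (K - i) l : ℝ))
      (fun i => a (φ i) l) (s : Set ℕ) := by
    intro i hi j hj hlt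
    simp only at hlt ⊢
    rcases Nat.eq_zero_or_pos l with hl0 | hl0
    · simp [hl0]
    rcases le_or_gt j i with h | h
    · exact_mod_cast Nat.cast_le.mpr (Nat.choose_le_choose l (by omega : K - i ≤ K - j))
    · exfalso
      have hi' : i ∈ s := hi
      have hj' : j ∈ s := hj
      rw [hs, Finset.mem_Icc] at hi' hj'
      exact absurd (hanti l hl0 (le_of_lt hlK) i j hi'.1 (le_of_lt h) hj'.2) (not_le.mpr hlt)
  have := hmono.sum_smul_comp_perm_le_sum_smul (σ := σ) hσsupp
  simpa [smul_eq_mul] using this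
end

section
/- Telescoping identity for the MCCS rate with redundant requests: for any demand with Ñ distinct files and redundancy counts N̂(0) = 0 ≤ N̂(1) ≤ ... ≤ N̂(Ñ), the sum over popularity ranks of the grouped message sizes satisfies Σ_{i=1}^{Ñ} Σ_{S ∈ Ã_i^{l+1}} (message size) = Σ_{i=1}^{Ñ} [ Σ_{j=i}^{Ñ} binom(K - j - N̂(i-1), l) − Σ_{j=i+1}^{Ñ} binom(K - j - N̂(i), l) ] a_{φ(i),l}, where message sizes are determined by the most popular file requested within each subset. -/
open Classical

/-- `Ã_i^{l+1}`: the size-`(l+1)` subsets of `{1,...,K}` containing the leader `ψ(i)` and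
none of the leaders `ψ(1),...,ψ(i-1)`. -/
noncomputable def leaderFamily (K l i : ℕ) (ψ : ℕ → ℕ) : Finset (Finset ℕ) :=
  (Finset.Icc 1 K).powerset.filter
    (fun S => S.card = l + 1 ∧ ψ i ∈ S ∧ ∀ j ∈ Finset.Ico 1 i, ψ j ∉ S)

theorem leaderFamily_nonempty {K l i : ℕ} {ψ : ℕ → ℕ} {S : Finset ℕ}
    (h : S ∈ leaderFamily K l i ψ) : S.Nonempty := by
  classical
  simp only [leaderFamily, Finset.mem_filter] at h
  exact ⟨ψ i, h.2.2.1⟩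

lemma mem_leaderFamily {K l i : ℕ} {ψ : ℕ → ℕ} {S : Finset ℕ} :
    S ∈ leaderFamily K l i ψ ↔ S ⊆ Finset.Icc 1 K ∧ S.card = l + 1 ∧ ψ i ∈ S ∧
      ∀ j ∈ Finset.Ico 1 i, ψ j ∉ S := by
  simp [leaderFamily, and_assoc]

/-- Counting lemma: number of sets in `Ã_i` all of whose members have rank `≥ m`. -/
lemma countB (K Ntil l : ℕ) (ψ r : ℕ → ℕ) (hatN : ℕ → ℕ)
    (hψmem : ∀ i ∈ Finset.Icc 1 Ntil, ψ i ∈ Finset.Icc 1 K)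
    (hψinj : Set.InjOn ψ (Finset.Icc 1 Ntil : Set ℕ))
    (hr : ∀ k ∈ Finset.Icc 1 K, r k ∈ Finset.Icc 1 Ntil)
    (hrψ : ∀ i ∈ Finset.Icc 1 Ntil, r (ψ i) = i)
    (hhat : ∀ i, hatN i =
      (((Finset.Icc 1 K) \ (Finset.Icc 1 Ntil).image ψ).filter (fun k => r k ≤ i)).card)
    (i m : ℕ) (hm : 1 ≤ m) (hmi : m ≤ i) (hiN : i ≤ Ntil) :
    ((leaderFamily K l i ψ).filter (fun S => ∀ k ∈ S, m ≤ r k)).card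
      = Nat.choose (K - i - hatN (m - 1)) l := by
  classical
  have hiI : i ∈ Finset.Icc 1 Ntil := Finset.mem_Icc.2 ⟨le_trans hm hmi, hiN⟩
  set L : Finset ℕ := (Finset.Icc 1 i).image ψ with hL
  set R : Finset ℕ := ((Finset.Icc 1 K) \ (Finset.Icc 1 Ntil).image ψ).filter
      (fun k => r k ≤ m - 1) with hRdef
  set D : Finset ℕ := L ∪ R with hD
  set G : Finset ℕ := (Finset.Icc 1 K) \ D with hG
  have hIccsub : Finset.Icc 1 i ⊆ Finset.Icc 1 Ntil := by
    apply Finset.Icc_subset_Icc_right hiN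
  have hLsub : L ⊆ Finset.Icc 1 K := by
    intro k hk
    obtain ⟨j, hj, rfl⟩ := Finset.mem_image.1 hk
    exact hψmem j (hIccsub hj)
  have hRsub : R ⊆ Finset.Icc 1 K := fun k hk =>
    (Finset.mem_sdiff.1 (Finset.mem_filter.1 hk).1).1
  have hDsub : D ⊆ Finset.Icc 1 K := Finset.union_subset hLsub hRsub
  have hLR : Disjoint L R := by
    rw [Finset.disjoint_left]
    intro k hkL hkR
    have := (Finset.mem_sdiff.1 (Finset.mem_filter.1 hkR).1).2
    exact this (Finset.image_subset_image hIccsub hkL)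
  have hcardL : L.card = i := by
    rw [hL, Finset.card_image_of_injOn (hψinj.mono (by exact_mod_cast hIccsub))]
    simp
  have hcardD : D.card = i + hatN (m - 1) := by
    rw [hD, Finset.card_union_of_disjoint hLR, hcardL, hhat]
  have hcardG : G.card = K - i - hatN (m - 1) := by
    rw [hG, Finset.card_sdiff_of_subset hDsub, hcardD, Nat.card_Icc]
    omega
  -- ψ i is in L, hence not in G
  have hψiL : ψ i ∈ L := Finset.mem_image.2 ⟨i, Finset.mem_Icc.2 ⟨le_trans hm hmi, le_refl i⟩, rfl⟩
  have hψiG : ψ i ∉ G := fun h => (Finset.mem_sdiff.1 h).2 (Finset.mem_union_left _ hψiL)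
  rw [← hcardG, ← Finset.card_powersetCard]
  refine Finset.card_bij' (fun S _ => S.erase (ψ i)) (fun T _ => insert (ψ i) T) ?hi ?hj ?left ?right
  case hi =>
    -- maps to
      intro S hS
      rw [Finset.mem_filter, mem_leaderFamily] at hS
      obtain ⟨⟨hsub, hcard, hmem, hlead⟩, hrank⟩ := hS
      rw [Finset.mem_powersetCard]
      constructor
      · intro k hk
        have hkS : k ∈ S := Finset.mem_of_mem_erase hk
        have hkne : k ≠ ψ i := Finset.ne_of_mem_erase hk
        rw [hG, Finset.mem_sdiff]
        refine ⟨hsub hkS, ?_⟩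
        rw [hD, Finset.mem_union]
        rintro (hkL | hkR)
        · obtain ⟨j, hj, hjk⟩ := Finset.mem_image.1 hkL
          rw [Finset.mem_Icc] at hj
          rcases eq_or_lt_of_le hj.2 with h | h
          · exact hkne (h ▸ hjk ▸ rfl)
          · exact hlead j (Finset.mem_Ico.2 ⟨hj.1, h⟩) (hjk ▸ hkS)
        · have := (Finset.mem_filter.1 hkR).2
          have := hrank k hkS
          omega
      · rw [Finset.card_erase_of_mem hmem, hcard]
        omega
  case hj =>
    -- inverse maps to
      intro T hT
      rw [Finset.mem_powersetCard] at hT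
      obtain ⟨hTsub, hTcard⟩ := hT
      have hψiT : ψ i ∉ T := fun h => hψiG (hTsub h)
      rw [Finset.mem_filter, mem_leaderFamily]
      have hTIcc : T ⊆ Finset.Icc 1 K := fun k hk => (Finset.mem_sdiff.1 (hTsub hk)).1
      refine ⟨⟨?_, ?_, Finset.mem_insert_self _ _, ?_⟩, ?_⟩
      · exact Finset.insert_subset (hψmem i hiI) hTIcc
      · rw [Finset.card_insert_of_notMem hψiT, hTcard]
      · intro j hj hjS
        rw [Finset.mem_Ico] at hj
        have hjI : j ∈ Finset.Icc 1 Ntil := Finset.mem_Icc.2 ⟨hj.1, le_trans (le_of_lt hj.2) hiN⟩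
        rcases Finset.mem_insert.1 hjS with h | h
        · exact absurd (hψinj hjI hiI h) (Nat.ne_of_lt hj.2)
        · have hjL : ψ j ∈ L := Finset.mem_image.2
            ⟨j, Finset.mem_Icc.2 ⟨hj.1, le_of_lt hj.2⟩, rfl⟩
          exact (Finset.mem_sdiff.1 (hTsub h)).2 (Finset.mem_union_left _ hjL)
      · intro k hk
        rcases Finset.mem_insert.1 hk with h | h
        · rw [h, hrψ i hiI]; exact hmi
        · have hkG := Finset.mem_sdiff.1 (hTsub h)
          have hkD := hkG.2
          rw [hD, Finset.mem_union] at hkD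
          push_neg at hkD
          by_cases himg : k ∈ (Finset.Icc 1 Ntil).image ψ
          · obtain ⟨j, hj, hjk⟩ := Finset.mem_image.1 himg
            have hji : ¬ j ≤ i := by
              intro hji
              exact hkD.1 (Finset.mem_image.2
                ⟨j, Finset.mem_Icc.2 ⟨(Finset.mem_Icc.1 hj).1, hji⟩, hjk⟩)
            have hrj : r k = j := by rw [← hjk]; exact hrψ j hj
            omega
          · have : k ∉ R := hkD.2
            rw [hRdef, Finset.mem_filter] at this
            push_neg at this
            have := this (Finset.mem_sdiff.2 ⟨hkG.1, himg⟩)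
            omega
  case left =>
    intro S hS
    rw [Finset.mem_filter, mem_leaderFamily] at hS
    exact Finset.insert_erase hS.1.2.2.1
  case right =>
    intro T hT
    rw [Finset.mem_powersetCard] at hT
    exact Finset.erase_insert (fun h => hψiG (hT.1 h))

  /-- If `m > i`, no set in `Ã_i` can have all ranks `≥ m` (the leader `ψ i` has rank `i`). -/
  lemma countB_zero (K Ntil l : ℕ) (ψ r : ℕ → ℕ)
      (hrψ : ∀ i ∈ Finset.Icc 1 Ntil, r (ψ i) = i)
      (i m : ℕ) (hi : 1 ≤ i) (hiN : i ≤ Ntil) (him : i < m) :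
      ((leaderFamily K l i ψ).filter (fun S => ∀ k ∈ S, m ≤ r k)).card = 0 := by
    classical
    rw [Finset.card_eq_zero, Finset.filter_eq_empty_iff]
    intro S hS hrank
    rw [mem_leaderFamily] at hS
    have := hrank (ψ i) hS.2.2.1
    rw [hrψ i (Finset.mem_Icc.2 ⟨hi, hiN⟩)] at this
    omega

/-- Lemma 3 (telescoping identity for the MCCS rate with redundant requests).
Users are `{1,...,K}`; `r k ∈ {1,...,Ñ}` is the popularity rank of the file `φ(r k)` requested
by user `k`; `ψ(i)` is the leader requesting file `φ(i)`; `N̂(i)` is the number of redundant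
(non-leader) requests for files `φ(1),...,φ(i)`.  The sum over popularity ranks `i` of the
zero-padded message sizes (each message's size is that of the subfile of the most popular file
requested within the subset) over the families `Ã_i^{l+1}` equals
`∑_i [∑_{j=i}^{Ñ} C(K-j-N̂(i-1),l) − ∑_{j=i+1}^{Ñ} C(K-j-N̂(i),l)] a_{φ(i),l}`. -/
theorem mccs_rate_telescoping (K Ntil l : ℕ) (hK : 1 ≤ K) (hN : 1 ≤ Ntil) (hNK : Ntil ≤ K)
    (hl : l ≤ K - 1) (ψ r φ : ℕ → ℕ) (a : ℕ → ℕ → ℝ) (hatN : ℕ → ℕ)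
    (hψmem : ∀ i ∈ Finset.Icc 1 Ntil, ψ i ∈ Finset.Icc 1 K)
    (hψinj : Set.InjOn ψ (Finset.Icc 1 Ntil : Set ℕ))
    (hr : ∀ k ∈ Finset.Icc 1 K, r k ∈ Finset.Icc 1 Ntil)
    (hrψ : ∀ i ∈ Finset.Icc 1 Ntil, r (ψ i) = i)
    (hhat : ∀ i, hatN i =
      (((Finset.Icc 1 K) \ (Finset.Icc 1 Ntil).image ψ).filter (fun k => r k ≤ i)).card)
    (horder : ∀ i, 1 ≤ i → i < Ntil → a (φ (i + 1)) l ≤ a (φ i) l)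
    (hann : ∀ n l', 0 ≤ a n l') :
    ∑ i ∈ Finset.Icc 1 Ntil,
        ∑ S ∈ (leaderFamily K l i ψ).attach,
          a (φ (S.1.inf' (leaderFamily_nonempty S.2) r)) l
      = ∑ i ∈ Finset.Icc 1 Ntil,
          ((∑ j ∈ Finset.Icc i Ntil, (Nat.choose (K - j - hatN (i - 1)) l : ℝ))
            - ∑ j ∈ Finset.Icc (i + 1) Ntil, (Nat.choose (K - j - hatN i) l : ℝ))
            * a (φ i) l := by
  classical
  set g : Finset ℕ → ℕ := fun S => if h : S.Nonempty then S.inf' h r else 0 with hg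
  set c : ℕ → ℕ → ℕ :=
    fun i m => ((leaderFamily K l i ψ).filter (fun S => ∀ k ∈ S, m ≤ r k)).card with hc
  -- Step 1: rewrite each inner sum as a sum over the minimum rank value
  have hstep1 : ∀ i ∈ Finset.Icc 1 Ntil,
      ∑ S ∈ (leaderFamily K l i ψ).attach,
          a (φ (S.1.inf' (leaderFamily_nonempty S.2) r)) l
        = ∑ m ∈ Finset.Icc 1 i, ((c i m : ℝ) - (c i (m + 1) : ℝ)) * a (φ m) l := by
    intro i hi
    rw [Finset.mem_Icc] at hi
    have h1 : ∑ S ∈ (leaderFamily K l i ψ).attach,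
        a (φ (S.1.inf' (leaderFamily_nonempty S.2) r)) l
        = ∑ S ∈ leaderFamily K l i ψ, a (φ (g S)) l := by
      rw [← Finset.sum_attach (leaderFamily K l i ψ) (fun S => a (φ (g S)) l)]
      apply Finset.sum_congr rfl
      intro S _
      have hne : S.1.Nonempty := leaderFamily_nonempty S.2
      simp only [hg, dif_pos hne]
    have hmaps : ∀ S ∈ leaderFamily K l i ψ, g S ∈ Finset.Icc 1 i := by
      intro S hS
      have hne : S.Nonempty := leaderFamily_nonempty hS
      rw [mem_leaderFamily] at hS
      simp only [hg, dif_pos hne]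
      obtain ⟨k, hk, hkeq⟩ := Finset.exists_mem_eq_inf' hne r
      rw [Finset.mem_Icc]
      refine ⟨?_, ?_⟩
      · rw [hkeq]; exact (Finset.mem_Icc.1 (hr k (hS.1 hk))).1
      · calc S.inf' hne r ≤ r (ψ i) := Finset.inf'_le r hS.2.2.1
          _ = i := hrψ i (Finset.mem_Icc.2 hi)
    rw [h1, ← Finset.sum_fiberwise_of_maps_to hmaps (fun S => a (φ (g S)) l)]
    apply Finset.sum_congr rfl
    intro m hm
    rw [Finset.mem_Icc] at hm
    have hfib : ∀ S ∈ (leaderFamily K l i ψ).filter (fun S => g S = m),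
        a (φ (g S)) l = a (φ m) l := by
      intro S hS
      rw [(Finset.mem_filter.1 hS).2]
    rw [Finset.sum_congr rfl hfib, Finset.sum_const, nsmul_eq_mul]
    congr 1
    have key : ((leaderFamily K l i ψ).filter (fun S => g S = m)).card + c i (m + 1)
        = c i m := by
      have h2 := Finset.card_filter_add_card_filter_not
        (s := (leaderFamily K l i ψ).filter (fun S => ∀ k ∈ S, m ≤ r k))
        (fun S => ∀ k ∈ S, m + 1 ≤ r k)
      rw [Finset.filter_filter, Finset.filter_filter] at h2
      have e1 : (leaderFamily K l i ψ).filter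
            (fun S => (∀ k ∈ S, m ≤ r k) ∧ ∀ k ∈ S, m + 1 ≤ r k)
          = (leaderFamily K l i ψ).filter (fun S => ∀ k ∈ S, m + 1 ≤ r k) := by
        apply Finset.filter_congr
        intro S _
        constructor
        · exact fun h => h.2
        · exact fun h => ⟨fun k hk => le_trans (Nat.le_succ m) (h k hk), h⟩
      have e2 : (leaderFamily K l i ψ).filter
            (fun S => (∀ k ∈ S, m ≤ r k) ∧ ¬ ∀ k ∈ S, m + 1 ≤ r k)
          = (leaderFamily K l i ψ).filter (fun S => g S = m) := by
        apply Finset.filter_congr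
        intro S hS
        have hne : S.Nonempty := leaderFamily_nonempty hS
        simp only [hg, dif_pos hne]
        rw [← Finset.le_inf'_iff hne, ← Finset.le_inf'_iff hne]
        constructor
        · rintro ⟨h1', h2'⟩; omega
        · intro h; omega
      rw [e1, e2] at h2
      rw [add_comm] at h2
      exact h2
    have : (((leaderFamily K l i ψ).filter (fun S => g S = m)).card : ℝ)
        = (c i m : ℝ) - (c i (m + 1) : ℝ) := by
      have := congrArg (Nat.cast (R := ℝ)) key
      push_cast at this
      linarith
    rw [this]
  rw [Finset.sum_congr rfl hstep1]
  -- Step 2: swap the order of summation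
  have hswap : ∀ (x y : ℕ), x ∈ Finset.Icc 1 Ntil ∧ y ∈ Finset.Icc 1 x
      ↔ x ∈ Finset.Icc y Ntil ∧ y ∈ Finset.Icc 1 Ntil := by
    intro x y
    simp only [Finset.mem_Icc]
    omega
  rw [Finset.sum_comm' hswap]
  -- Step 3: evaluate the inner telescoping sums using the counting lemmas
  apply Finset.sum_congr rfl
  intro m hm
  rw [Finset.mem_Icc] at hm
  rw [← Finset.sum_mul]
  congr 1
  rw [Finset.sum_sub_distrib]
  congr 1
  · apply Finset.sum_congr rfl
    intro i hi
    rw [Finset.mem_Icc] at hi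
    simp only [hc]
    exact_mod_cast countB K Ntil l ψ r hatN hψmem hψinj hr hrψ hhat i m hm.1 hi.1 hi.2
  · have hins : Finset.Icc m Ntil = insert m (Finset.Icc (m + 1) Ntil) := by
      ext x
      simp only [Finset.mem_Icc, Finset.mem_insert]
      omega
    have hnotmem : m ∉ Finset.Icc (m + 1) Ntil := by
      simp only [Finset.mem_Icc]; omega
    rw [hins, Finset.sum_insert hnotmem]
    have hzero : (c m (m + 1) : ℝ) = 0 := by
      simp only [hc]
      exact_mod_cast countB_zero K Ntil l ψ r hrψ m (m + 1) hm.1 hm.2 (Nat.lt_succ_self m)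
    rw [hzero, zero_add]
    apply Finset.sum_congr rfl
    intro i hi
    rw [Finset.mem_Icc] at hi
    have h := countB K Ntil l ψ r hatN hψmem hψinj hr hrψ hhat i (m + 1)
      (by omega) hi.1 hi.2
    simp only [Nat.add_sub_cancel] at h
    simp only [hc]
    exact_mod_cast h
end

section
/- If all files have identical placement vectors (a_{1,l} = ... = a_{N,l} for every l), then for every demand vector d the MCCS rate and lower bound coincide: R_MCCS(d; a) = R_lb(D; a) = Σ_{l=0}^{K-1} Σ_{i=1}^{Ñ(d)} binom(K-i, l) a_{1,l}, where Ñ(d) is the number of distinct files requested. -/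
open Finset

lemma choose_telescope (K l : ℕ) :
    ∀ m, m ≤ K → (∑ i ∈ Finset.Icc 1 m, Nat.choose (K - i) l) + Nat.choose (K - m) (l+1)
      = Nat.choose K (l+1) := by
  intro m
  induction m with
  | zero => simp
  | succ m ih =>
    intro hm
    rw [Finset.sum_Icc_succ_top (by omega : 1 ≤ m + 1)]
    have h1 : K - (m+1) + 1 = K - m := by omega
    have := Nat.choose_succ_succ (K - (m+1)) l
    rw [show (K - (m+1)).succ = K - m by omega] at this
    simp only [Nat.succ_eq_add_one] at this
    have ihm := ih (by omega)
    omega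

lemma count_inter (A U : Finset ℕ) (hU : U ⊆ A) (n : ℕ) :
    ((Finset.powersetCard n A).filter (fun S => (S ∩ U).Nonempty)).card
      + Nat.choose (A.card - U.card) n = Nat.choose A.card n := by
  have hsplit := Finset.card_filter_add_card_filter_not
    (s := Finset.powersetCard n A) (p := fun S => (S ∩ U).Nonempty)
  have hneg : (Finset.powersetCard n A).filter (fun S => ¬ (S ∩ U).Nonempty)
      = Finset.powersetCard n (A \ U) := by
    ext S
    simp only [Finset.mem_filter, Finset.mem_powersetCard, Finset.not_nonempty_iff_eq_empty,
      Finset.subset_sdiff, ← Finset.disjoint_iff_inter_eq_empty]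
    tauto
  rw [hneg] at hsplit
  rw [Finset.card_powersetCard, Finset.card_powersetCard, Finset.card_sdiff_of_subset hU] at hsplit
  omega

/-- If all files have identical placement vectors (`a_{n,l} = a_{1,l}` for every `n,l`), then
for every demand vector `d` the MCCS rate (sum of zero-padded message sizes over all user
subsets intersecting the leader group `U`) equals the lower bound
`∑_{l=0}^{K-1} ∑_{i=1}^{Ñ(d)} C(K-i,l) a_{1,l}`, where `Ñ(d)` is the number of distinct
requested files. -/
theorem identical_placement_rate_eq_lb (K N : ℕ) (hK : 1 ≤ K) (hN : 1 ≤ N)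
    (d : ℕ → ℕ) (hd : ∀ k ∈ Finset.Icc 1 K, d k ∈ Finset.Icc 1 N)
    (U : Finset ℕ) (hU : U ⊆ Finset.Icc 1 K)
    (hUcard : U.card = ((Finset.Icc 1 K).image d).card)
    (hUleader : U.image d = (Finset.Icc 1 K).image d)
    (a : ℕ → ℕ → ℝ) (ha : ∀ n l, 0 ≤ a n l)
    (hsym : ∀ n l, a n l = a 1 l) :
    ∑ S ∈ ((Finset.Icc 1 K).powerset.filter (fun S => (S ∩ U).Nonempty)).attach,
        S.1.sup' ((Finset.mem_filter.mp S.2).2.mono Finset.inter_subset_left)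
          (fun k => a (d k) (S.1.card - 1))
      = ∑ l ∈ Finset.range K, ∑ i ∈ Finset.Icc 1 ((Finset.Icc 1 K).image d).card,
          (Nat.choose (K - i) l : ℝ) * a 1 l := by
  set T := (Finset.Icc 1 K).powerset.filter (fun S => (S ∩ U).Nonempty) with hT
  have h1 : ∑ S ∈ T.attach,
        S.1.sup' ((Finset.mem_filter.mp S.2).2.mono Finset.inter_subset_left)
          (fun k => a (d k) (S.1.card - 1))
      = ∑ S ∈ T, a 1 (S.card - 1) := by
    rw [← Finset.sum_attach T (fun S => a 1 (S.card - 1))]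
    apply Finset.sum_congr rfl
    intro S _
    simp only [hsym, Finset.sup'_const]
  rw [h1]
  have hTcard : ∀ S ∈ T, 1 ≤ S.card ∧ S.card ≤ K := by
    intro S hS
    rw [hT, Finset.mem_filter, Finset.mem_powerset] at hS
    constructor
    · exact Finset.card_pos.mpr (hS.2.mono Finset.inter_subset_left)
    · calc S.card ≤ (Finset.Icc 1 K).card := Finset.card_le_card hS.1
        _ = K := by simp
  have hmaps : ∀ S ∈ T, S.card - 1 ∈ Finset.range K := by
    intro S hS
    have := hTcard S hS
    simp only [Finset.mem_range]
    omega
  rw [← Finset.sum_fiberwise_of_maps_to hmaps]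
  apply Finset.sum_congr rfl
  intro l hl
  have hinner : ∑ S ∈ T.filter (fun S => S.card - 1 = l), a 1 (S.card - 1)
      = (T.filter (fun S => S.card - 1 = l)).card * a 1 l := by
    rw [Finset.sum_congr rfl (fun S hS => by
      rw [(Finset.mem_filter.mp hS).2]), Finset.sum_const, nsmul_eq_mul]
  rw [hinner]
  -- count
  have hfe : T.filter (fun S => S.card - 1 = l)
      = (Finset.powersetCard (l+1) (Finset.Icc 1 K)).filter (fun S => (S ∩ U).Nonempty) := by
    ext S
    simp only [hT, Finset.mem_filter, Finset.mem_powerset, Finset.mem_powersetCard]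
    constructor
    · rintro ⟨⟨hs, hne⟩, hc⟩
      have : 1 ≤ S.card := Finset.card_pos.mpr (hne.mono Finset.inter_subset_left)
      exact ⟨⟨hs, by omega⟩, hne⟩
    · rintro ⟨⟨hs, hc⟩, hne⟩
      exact ⟨⟨hs, hne⟩, by omega⟩
  have hKcard : (Finset.Icc 1 K).card = K := by simp
  have hc1 := count_inter (Finset.Icc 1 K) U hU (l+1)
  rw [hKcard] at hc1
  rw [← hUcard]
  have hc2 := choose_telescope K l U.card ((Finset.card_le_card hU).trans_eq hKcard)
  have hcount : (T.filter (fun S => S.card - 1 = l)).card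
      = ∑ i ∈ Finset.Icc 1 U.card, Nat.choose (K - i) l := by
    rw [hfe]; omega
  rw [hcount, Nat.cast_sum, Finset.sum_mul]
end

section
/- Two-file-group Case-1 placement feasibility: for n_0 ∈ {1,...,N−1}, integers l_0 with ⌊KM/N⌋+1 ≤ l_0 ≤ min{K, ⌈KM/n_0⌉−1}, the placement a_{n,l_0} = 1/binom(K,l_0) for n ≤ n_0, a_{n,0} = 1 − (KM/l_0 − n_0)/(N − n_0) and a_{n,l_0} = (1/binom(K,l_0))·(KM/l_0 − n_0)/(N − n_0) for n > n_0 (all other entries 0) satisfies Σ_l binom(K,l) a_{n,l} = 1 for every n, Σ_{n=1}^{N} Σ_{l=1}^{K} binom(K−1,l−1) a_{n,l} = M, and 0 ≤ a_{n,l} for all n, l. -/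
/-- Two-file-group Case-1 placement feasibility: for `n₀ ∈ {1,...,N−1}` and
`⌊KM/N⌋+1 ≤ l₀ ≤ min{K, ⌈KM/n₀⌉−1}`, the placement
`a_{n,l₀} = 1/C(K,l₀)` for `n ≤ n₀`, and for `n > n₀`
`a_{n,0} = 1 − (KM/l₀ − n₀)/(N − n₀)`, `a_{n,l₀} = (1/C(K,l₀))·(KM/l₀ − n₀)/(N − n₀)`
(all other entries `0`) satisfies the file-partition constraint for every file, uses the full
cache memory `M`, and is nonnegative. -/
theorem two_group_case1_feasible (K N n₀ l₀ : ℕ) (M : ℝ) (hK : 1 ≤ K) (hN : 2 ≤ N)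
    (hM0 : 0 < M) (hMN : M < N) (hn₀1 : 1 ≤ n₀) (hn₀N : n₀ ≤ N - 1)
    (hl₀lb : Nat.floor ((K : ℝ) * M / N) + 1 ≤ l₀)
    (hl₀ub : l₀ ≤ min K (Nat.ceil ((K : ℝ) * M / n₀) - 1))
    (a : ℕ → ℕ → ℝ)
    (hadef : ∀ n l, a n l =
      if n ≤ n₀ then (if l = l₀ then 1 / (Nat.choose K l₀ : ℝ) else 0)
      else if l = 0 then 1 - ((K : ℝ) * M / l₀ - n₀) / ((N : ℝ) - n₀)
      else if l = l₀ then (1 / (Nat.choose K l₀ : ℝ)) * (((K : ℝ) * M / l₀ - n₀) / ((N : ℝ) - n₀))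
      else 0) :
    (∀ n ∈ Finset.Icc 1 N, ∑ l ∈ Finset.range (K + 1), (Nat.choose K l : ℝ) * a n l = 1)
    ∧ (∑ n ∈ Finset.Icc 1 N, ∑ l ∈ Finset.Icc 1 K,
        (Nat.choose (K - 1) (l - 1) : ℝ) * a n l = M)
    ∧ (∀ n l, 0 ≤ a n l) := by
  have hl₀K : l₀ ≤ K := le_trans hl₀ub (min_le_left _ _)
  have hl₀1 : 1 ≤ l₀ := le_trans (Nat.le_add_left 1 _) hl₀lb
  have hl₀0 : l₀ ≠ 0 := by omega
  have hKpos : (0:ℝ) < K := by exact_mod_cast hK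
  have hl₀pos : (0:ℝ) < l₀ := by exact_mod_cast hl₀1
  have hn₀pos : (0:ℝ) < n₀ := by exact_mod_cast hn₀1
  have hn₀ltN : n₀ < N := by omega
  have hNn₀ : (0:ℝ) < (N:ℝ) - n₀ := by
    have : (n₀:ℝ) < N := by exact_mod_cast hn₀ltN
    linarith
  have hCpos : (0:ℝ) < (Nat.choose K l₀ : ℝ) := by
    exact_mod_cast Nat.choose_pos hl₀K
  -- upper bound: K*M/l₀ < N
  have hub : (K:ℝ) * M / l₀ < N := by
    have h1 : Nat.floor ((K:ℝ) * M / N) < l₀ := by omega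
    have h2 : (K:ℝ) * M / N < l₀ := by
      by_contra h
      push_neg at h
      exact absurd (Nat.le_floor h) (by omega)
    have hNpos : (0:ℝ) < N := by positivity
    rw [div_lt_iff₀ hNpos] at h2
    rw [div_lt_iff₀ hl₀pos]
    linarith [h2]
  -- lower bound: n₀ < K*M/l₀
  have hlb : (n₀:ℝ) < (K:ℝ) * M / l₀ := by
    have h1 : l₀ < Nat.ceil ((K:ℝ) * M / n₀) := by
      have := le_trans hl₀ub (min_le_right _ _)
      have hc : 1 ≤ Nat.ceil ((K:ℝ) * M / n₀) := by
        rw [Nat.one_le_ceil_iff]; positivity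
      omega
    have h2 : (l₀:ℝ) < (K:ℝ) * M / n₀ := by exact_mod_cast Nat.lt_ceil.mp h1
    rw [lt_div_iff₀ hn₀pos] at h2
    rw [lt_div_iff₀ hl₀pos]
    linarith
  set t : ℝ := ((K:ℝ) * M / l₀ - n₀) / ((N:ℝ) - n₀) with ht
  have ht0 : 0 < t := by
    apply div_pos; linarith; exact hNn₀
  have ht1 : t ≤ 1 := by
    rw [div_le_one hNn₀]; linarith
  refine ⟨?_, ?_, ?_⟩
  · intro n hn
    by_cases hnn : n ≤ n₀
    · have : ∀ l ∈ Finset.range (K+1), (Nat.choose K l : ℝ) * a n l =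
        if l = l₀ then (Nat.choose K l₀ : ℝ) * (1 / (Nat.choose K l₀ : ℝ)) else 0 := by
        intro l _
        rw [hadef, if_pos hnn]
        by_cases h : l = l₀ <;> simp [h]
      rw [Finset.sum_congr rfl this, Finset.sum_ite_eq']
      rw [if_pos (by simp [Finset.mem_range]; omega)]
      field_simp
    · have : ∀ l ∈ Finset.range (K+1), (Nat.choose K l : ℝ) * a n l =
        (if l = 0 then 1 - t else 0) +
        (if l = l₀ then (Nat.choose K l₀ : ℝ) * ((1 / (Nat.choose K l₀ : ℝ)) * t) else 0) := by
        intro l _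
        rw [hadef, if_neg hnn]
        by_cases h0 : l = 0
        · simp [h0, hl₀0, Ne.symm hl₀0]
        · by_cases h : l = l₀ <;> simp [h0, h, hl₀0]
      rw [Finset.sum_congr rfl this, Finset.sum_add_distrib,
        Finset.sum_ite_eq', Finset.sum_ite_eq']
      rw [if_pos (by simp), if_pos (by simp [Finset.mem_range]; omega)]
      field_simp
      ring
  · have hchoose : (K:ℝ) * (Nat.choose (K-1) (l₀-1) : ℝ) = (Nat.choose K l₀ : ℝ) * l₀ := by
      have := Nat.add_one_mul_choose_eq (K-1) (l₀-1)
      have hK' : (K-1) + 1 = K := by omega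
      have hl' : (l₀-1) + 1 = l₀ := by omega
      rw [hK', hl'] at this
      exact_mod_cast this
    have hinner : ∀ n, ∑ l ∈ Finset.Icc 1 K, (Nat.choose (K-1) (l-1) : ℝ) * a n l
        = (Nat.choose (K-1) (l₀-1) : ℝ) * a n l₀ := by
      intro n
      apply Finset.sum_eq_single_of_mem l₀ (by simp [Finset.mem_Icc]; omega)
      intro l hl hne
      simp only [Finset.mem_Icc] at hl
      rw [hadef]
      have hl0 : l ≠ 0 := by omega
      by_cases hnn : n ≤ n₀ <;> simp [hnn, hl0, hne]
    simp only [hinner]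
    have hsplit : Finset.Icc 1 N = Finset.Ioc 0 N := Finset.Icc_add_one_left_eq_Ioc 0 N
    rw [hsplit, ← Finset.sum_Ioc_consecutive _ (Nat.zero_le n₀) (le_of_lt hn₀ltN)]
    have h1 : ∀ n ∈ Finset.Ioc 0 n₀, (Nat.choose (K-1) (l₀-1) : ℝ) * a n l₀
        = (Nat.choose (K-1) (l₀-1) : ℝ) * (1 / (Nat.choose K l₀ : ℝ)) := by
      intro n hn
      simp only [Finset.mem_Ioc] at hn
      rw [hadef, if_pos hn.2, if_pos rfl]
    have h2 : ∀ n ∈ Finset.Ioc n₀ N, (Nat.choose (K-1) (l₀-1) : ℝ) * a n l₀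
        = (Nat.choose (K-1) (l₀-1) : ℝ) * ((1 / (Nat.choose K l₀ : ℝ)) * t) := by
      intro n hn
      simp only [Finset.mem_Ioc] at hn
      rw [hadef, if_neg (by omega), if_neg hl₀0, if_pos rfl]
    rw [Finset.sum_congr rfl h1, Finset.sum_congr rfl h2,
      Finset.sum_const, Finset.sum_const, Nat.card_Ioc, Nat.card_Ioc]
    simp only [Nat.sub_zero, nsmul_eq_mul]
    have hcast : ((N - n₀ : ℕ) : ℝ) = (N:ℝ) - n₀ := by
      rw [Nat.cast_sub (le_of_lt hn₀ltN)]
    rw [hcast, ht]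
    have hC : (Nat.choose K l₀ : ℝ) ≠ 0 := ne_of_gt hCpos
    have hc' : ((K - 1).choose (l₀ - 1) : ℝ) = ((l₀:ℝ)/K) * (Nat.choose K l₀ : ℝ) := by
      field_simp
      linarith [hchoose]
    rw [hc']
    field_simp
    ring
  · intro n l
    rw [hadef]
    by_cases hnn : n ≤ n₀
    · by_cases h : l = l₀ <;> simp [hnn, h]
    · by_cases h0 : l = 0
      · simp [hnn, h0]; linarith
      · by_cases h : l = l₀ <;> simp [hnn, h0, h, hl₀0]
        exact mul_nonneg (by positivity) ht0.le
end

section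
/- Two-file-group Case-2 placement feasibility: for n_0 < N, l_0 ≠ l_1 in {1,...,K} with either (l_0 > KM/N and l_1 < KM/n_0) or (l_0 < KM/N and l_1 > KM/n_0), define t = (KM/l_1 − n_0)/((l_0/l_1)N − n_0); then the placement a_{n,l_0} = t/binom(K,l_0) for all n, a_{n,l_1} = ((l_0/l_1)N − KM/l_1)/(((l_0/l_1)N − n_0)·binom(K,l_1)) for n ≤ n_0, a_{n,0} = 1 − t for n > n_0 (all other entries 0) satisfies Σ_l binom(K,l) a_{n,l} = 1 for every n, Σ_{n=1}^{N} Σ_{l=1}^{K} binom(K−1,l−1) a_{n,l} = M, and all entries lie in [0,1]. -/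
set_option maxHeartbeats 1000000

/-- Two-file-group Case-2 placement feasibility: for `n₀ < N` and `l₀ ≠ l₁` in `{1,...,K}`
with either (`l₀ > KM/N` and `l₁ < KM/n₀`) or (`l₀ < KM/N` and `l₁ > KM/n₀`), let
`t = (KM/l₁ − n₀)/((l₀/l₁)N − n₀)`.  The placement `a_{n,l₀} = t/C(K,l₀)` for all `n`,
`a_{n,l₁} = ((l₀/l₁)N − KM/l₁)/(((l₀/l₁)N − n₀)·C(K,l₁))` for `n ≤ n₀`, `a_{n,0} = 1 − t`
for `n > n₀` (all other entries `0`) satisfies the file-partition constraint for every file,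
uses the full cache memory `M`, and has all entries in `[0,1]`. -/
theorem two_group_case2_feasible (K N n₀ l₀ l₁ : ℕ) (M t : ℝ) (hK : 1 ≤ K) (hN : 2 ≤ N)
    (hM0 : 0 < M) (hMN : M < N) (hn₀1 : 1 ≤ n₀) (hn₀N : n₀ ≤ N - 1)
    (hl₀ : l₀ ∈ Finset.Icc 1 K) (hl₁ : l₁ ∈ Finset.Icc 1 K) (hll : l₀ ≠ l₁)
    (hcond : ((K : ℝ) * M / N < l₀ ∧ (l₁ : ℝ) < (K : ℝ) * M / n₀)
      ∨ ((l₀ : ℝ) < (K : ℝ) * M / N ∧ (K : ℝ) * M / n₀ < l₁))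
    (ht : t = ((K : ℝ) * M / l₁ - n₀) / (((l₀ : ℝ) / l₁) * N - n₀))
    (a : ℕ → ℕ → ℝ)
    (hadef : ∀ n l, a n l =
      if l = l₀ then t / (Nat.choose K l₀ : ℝ)
      else if n ≤ n₀ ∧ l = l₁ then
        (((l₀ : ℝ) / l₁) * N - (K : ℝ) * M / l₁)
          / (((((l₀ : ℝ) / l₁) * N - n₀)) * (Nat.choose K l₁ : ℝ))
      else if n₀ < n ∧ l = 0 then 1 - t
      else 0) :
    (∀ n ∈ Finset.Icc 1 N, ∑ l ∈ Finset.range (K + 1), (Nat.choose K l : ℝ) * a n l = 1)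
    ∧ (∑ n ∈ Finset.Icc 1 N, ∑ l ∈ Finset.Icc 1 K,
        (Nat.choose (K - 1) (l - 1) : ℝ) * a n l = M)
    ∧ (∀ n l, 0 ≤ a n l ∧ a n l ≤ 1) := by
  obtain ⟨hl₀1, hl₀K⟩ := Finset.mem_Icc.mp hl₀
  obtain ⟨hl₁1, hl₁K⟩ := Finset.mem_Icc.mp hl₁
  have hn₀ltN : n₀ < N := by omega
  have hNR : (0:ℝ) < N := by exact_mod_cast (by omega : 0 < N)
  have hn₀R : (0:ℝ) < n₀ := by exact_mod_cast (by omega : 0 < n₀)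
  have hl1R : (0:ℝ) < l₁ := by exact_mod_cast (by omega : 0 < l₁)
  have hKR : (0:ℝ) < K := by exact_mod_cast (by omega : 0 < K)
  have hC0 : (0:ℝ) < (Nat.choose K l₀ : ℝ) := by exact_mod_cast Nat.choose_pos hl₀K
  have hC1 : (0:ℝ) < (Nat.choose K l₁ : ℝ) := by exact_mod_cast Nat.choose_pos hl₁K
  have hC0ge : (1:ℝ) ≤ (Nat.choose K l₀ : ℝ) := by exact_mod_cast Nat.choose_pos hl₀K
  have hC1ge : (1:ℝ) ≤ (Nat.choose K l₁ : ℝ) := by exact_mod_cast Nat.choose_pos hl₁K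
  -- sign facts
  have hsigns : (0 < (K:ℝ)*M/l₁ - n₀ ∧ 0 < ((l₀:ℝ)/l₁)*N - (K:ℝ)*M/l₁)
      ∨ ((K:ℝ)*M/l₁ - n₀ < 0 ∧ ((l₀:ℝ)/l₁)*N - (K:ℝ)*M/l₁ < 0) := by
    rcases hcond with ⟨h1, h2⟩ | ⟨h1, h2⟩
    · left
      rw [div_lt_iff₀ hNR] at h1
      rw [lt_div_iff₀ hn₀R] at h2
      constructor
      · rw [sub_pos, lt_div_iff₀ hl1R]; nlinarith
      · have e : ((l₀:ℝ)/l₁)*N - (K:ℝ)*M/l₁ = ((l₀:ℝ)*N - (K:ℝ)*M)/l₁ := by ring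
        rw [e]; exact div_pos (by linarith) hl1R
    · right
      rw [lt_div_iff₀ hNR] at h1
      rw [div_lt_iff₀ hn₀R] at h2
      constructor
      · rw [sub_neg, div_lt_iff₀ hl1R]; nlinarith
      · have e : ((l₀:ℝ)/l₁)*N - (K:ℝ)*M/l₁ = ((l₀:ℝ)*N - (K:ℝ)*M)/l₁ := by ring
        rw [e]; exact div_neg_of_neg_of_pos (by linarith) hl1R
  have hrel : ((K:ℝ)*M/l₁ - n₀) + (((l₀:ℝ)/l₁)*N - (K:ℝ)*M/l₁) = ((l₀:ℝ)/l₁)*N - n₀ := by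
    ring
  have hD : ((l₀:ℝ)/l₁)*N - (n₀:ℝ) ≠ 0 := by
    rcases hsigns with ⟨h1, h2⟩ | ⟨h1, h2⟩
    · exact ne_of_gt (by linarith)
    · exact ne_of_lt (by linarith)
  have ht0 : 0 ≤ t := by
    rw [ht]
    rcases hsigns with ⟨h1, h2⟩ | ⟨h1, h2⟩
    · exact le_of_lt (div_pos h1 (by linarith))
    · rw [← neg_div_neg_eq]
      exact le_of_lt (div_pos (by linarith) (by linarith))
  have ht1 : t ≤ 1 := by
    rw [ht]
    rcases hsigns with ⟨h1, h2⟩ | ⟨h1, h2⟩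
    · rw [div_le_one (by linarith)]; nlinarith
    · rw [← neg_div_neg_eq]
      rw [div_le_one (by linarith)]; nlinarith
  have hq0 : 0 ≤ (((l₀:ℝ)/l₁)*N - (K:ℝ)*M/l₁) / (((l₀:ℝ)/l₁)*N - n₀) := by
    rcases hsigns with ⟨h1, h2⟩ | ⟨h1, h2⟩
    · exact le_of_lt (div_pos h2 (by linarith))
    · rw [← neg_div_neg_eq]
      exact le_of_lt (div_pos (by linarith) (by linarith))
  have hq1 : (((l₀:ℝ)/l₁)*N - (K:ℝ)*M/l₁) / (((l₀:ℝ)/l₁)*N - n₀) ≤ 1 := by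
    rcases hsigns with ⟨h1, h2⟩ | ⟨h1, h2⟩
    · rw [div_le_one (by linarith)]; nlinarith
    · rw [← neg_div_neg_eq]
      rw [div_le_one (by linarith)]; nlinarith
  have htq : t + (((l₀:ℝ)/l₁)*N - (K:ℝ)*M/l₁) / (((l₀:ℝ)/l₁)*N - n₀) = 1 := by
    rw [ht, ← add_div, hrel, div_self hD]
  -- value lemmas
  have hal₀ : ∀ n, a n l₀ = t / (Nat.choose K l₀ : ℝ) := by
    intro n; rw [hadef, if_pos rfl]
  have hal₁ : ∀ n, a n l₁ =
      if n ≤ n₀ then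
        (((l₀:ℝ)/l₁)*N - (K:ℝ)*M/l₁) / ((((l₀:ℝ)/l₁)*N - n₀) * (Nat.choose K l₁ : ℝ))
      else 0 := by
    intro n
    rw [hadef, if_neg (show ¬ l₁ = l₀ by omega)]
    by_cases h : n ≤ n₀
    · rw [if_pos ⟨h, rfl⟩, if_pos h]
    · rw [if_neg (fun hc => h hc.1), if_neg (show ¬ (n₀ < n ∧ l₁ = 0) by omega), if_neg h]
  have hal₂ : ∀ n, a n 0 = if n₀ < n then 1 - t else 0 := by
    intro n
    rw [hadef, if_neg (show ¬ (0:ℕ) = l₀ by omega),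
      if_neg (show ¬ (n ≤ n₀ ∧ (0:ℕ) = l₁) by omega)]
    by_cases h : n₀ < n
    · rw [if_pos ⟨h, rfl⟩, if_pos h]
    · rw [if_neg (fun hc => h hc.1), if_neg h]
  refine ⟨?_, ?_, ?_⟩
  · intro n hn
    have hsub : ({0, l₀, l₁} : Finset ℕ) ⊆ Finset.range (K+1) := by
      intro x hx
      simp only [Finset.mem_insert, Finset.mem_singleton] at hx
      simp only [Finset.mem_range]
      rcases hx with rfl | rfl | rfl <;> omega
    have hzero : ∀ x ∈ Finset.range (K+1), x ∉ ({0, l₀, l₁} : Finset ℕ) →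
        (Nat.choose K x : ℝ) * a n x = 0 := by
      intro x _ hx
      simp only [Finset.mem_insert, Finset.mem_singleton, not_or] at hx
      rw [hadef, if_neg hx.2.1, if_neg (fun hc => hx.2.2 hc.2), if_neg (fun hc => hx.1 hc.2),
        mul_zero]
    rw [← Finset.sum_subset hsub hzero]
    have h0ni : (0:ℕ) ∉ ({l₀, l₁} : Finset ℕ) := by
      simp only [Finset.mem_insert, Finset.mem_singleton]; omega
    rw [Finset.sum_insert h0ni, Finset.sum_pair hll]
    rw [hal₀, hal₁, hal₂]
    have e1 : (Nat.choose K l₀:ℝ) * (t / (Nat.choose K l₀:ℝ)) = t := by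
      field_simp
    by_cases hn' : n ≤ n₀
    · rw [if_pos hn', if_neg (by omega)]
      have e2 : (Nat.choose K l₁:ℝ) *
          ((((l₀:ℝ)/l₁)*N - (K:ℝ)*M/l₁) / ((((l₀:ℝ)/l₁)*N - n₀) * (Nat.choose K l₁ : ℝ)))
          = (((l₀:ℝ)/l₁)*N - (K:ℝ)*M/l₁) / (((l₀:ℝ)/l₁)*N - n₀) := by
        rw [div_mul_eq_div_div]
        rw [mul_div_cancel₀ _ (ne_of_gt hC1)]
      rw [e1, e2, Nat.choose_zero_right]
      push_cast
      linarith [htq]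
    · rw [if_neg hn', if_pos (by omega), Nat.choose_zero_right]
      rw [e1]
      push_cast
      ring
  · have hsub2 : ({l₀, l₁} : Finset ℕ) ⊆ Finset.Icc 1 K := by
      intro x hx
      simp only [Finset.mem_insert, Finset.mem_singleton] at hx
      simp only [Finset.mem_Icc]
      rcases hx with rfl | rfl <;> omega
    have hinner : ∀ n, ∑ l ∈ Finset.Icc 1 K, (Nat.choose (K-1) (l-1) : ℝ) * a n l
        = (Nat.choose (K-1) (l₀-1) : ℝ) * a n l₀ + (Nat.choose (K-1) (l₁-1) : ℝ) * a n l₁ := by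
      intro n
      refine ((Finset.sum_subset hsub2 ?_).symm).trans (Finset.sum_pair hll)
      intro x hxI hx
      simp only [Finset.mem_insert, Finset.mem_singleton, not_or] at hx
      simp only [Finset.mem_Icc] at hxI
      rw [hadef, if_neg hx.1, if_neg (fun hc => hx.2 hc.2),
        if_neg (show ¬ (n₀ < n ∧ x = 0) by omega), mul_zero]
    have hch : ∀ l, 1 ≤ l → l ≤ K →
        (Nat.choose (K-1) (l-1) : ℝ) = (l:ℝ) * (Nat.choose K l : ℝ) / K := by
      intro l h1 h2
      have h := Nat.add_one_mul_choose_eq (K-1) (l-1)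
      rw [Nat.sub_add_cancel hK, Nat.sub_add_cancel h1] at h
      rw [eq_div_iff (ne_of_gt hKR)]
      exact_mod_cast (by rw [mul_comm] at h; rw [h]; ring : Nat.choose (K-1) (l-1) * K = l * Nat.choose K l)
    simp only [hinner, hal₀, hal₁, mul_ite, mul_zero]
    rw [Finset.sum_add_distrib, Finset.sum_const, Finset.sum_ite, Finset.sum_const,
      Finset.sum_const_zero, add_zero]
    have hfil : Finset.filter (fun n => n ≤ n₀) (Finset.Icc 1 N) = Finset.Icc 1 n₀ := by
      ext x
      simp only [Finset.mem_filter, Finset.mem_Icc]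
      omega
    rw [hfil, Nat.card_Icc, Nat.card_Icc, Nat.add_sub_cancel, Nat.add_sub_cancel]
    rw [hch l₀ hl₀1 hl₀K, hch l₁ hl₁1 hl₁K]
    simp only [nsmul_eq_mul]
    have hD2 : (l₀:ℝ)*N - n₀*l₁ ≠ 0 := by
      have e : ((l₀:ℝ)/l₁)*N - n₀ = ((l₀:ℝ)*N - n₀*l₁)/l₁ := by
        field_simp
      rw [e] at hD
      exact fun h0 => hD (by rw [h0, zero_div])
    have htx : t = ((K:ℝ)*M - (n₀:ℝ)*l₁)/((l₀:ℝ)*N - n₀*l₁) := by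
      rw [ht, div_eq_div_iff hD hD2]
      field_simp
    have hqx : (((l₀:ℝ)/l₁)*N - (K:ℝ)*M/l₁) / ((((l₀:ℝ)/l₁)*N - n₀) * (Nat.choose K l₁:ℝ))
        = (((l₀:ℝ)*N - (K:ℝ)*M)/((l₀:ℝ)*N - n₀*l₁)) / (Nat.choose K l₁:ℝ) := by
      rw [← div_div]
      congr 1
      rw [show ((l₀:ℝ)/l₁)*N - (K:ℝ)*M/l₁ = ((l₀:ℝ)*N - (K:ℝ)*M)/l₁ from by ring,
        show ((l₀:ℝ)/l₁)*N - (n₀:ℝ) = ((l₀:ℝ)*N - (n₀:ℝ)*l₁)/l₁ from by field_simp,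
        div_div_div_comm, div_self (ne_of_gt hl1R), div_one]
    rw [htx, hqx]
    have hD3 : (N:ℝ)*l₀ - n₀*l₁ ≠ 0 := by rw [mul_comm]; exact hD2
    field_simp
    ring
  · intro n l
    rw [hadef]
    split_ifs with h1 h2 h3
    · constructor
      · exact div_nonneg ht0 (le_of_lt hC0)
      · rw [div_le_one hC0]; linarith
    · have e : (((l₀:ℝ)/l₁)*N - (K:ℝ)*M/l₁) / ((((l₀:ℝ)/l₁)*N - n₀) * (Nat.choose K l₁ : ℝ))
          = ((((l₀:ℝ)/l₁)*N - (K:ℝ)*M/l₁) / (((l₀:ℝ)/l₁)*N - n₀)) / (Nat.choose K l₁ : ℝ) := by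
        rw [div_div]
      rw [e]
      constructor
      · exact div_nonneg hq0 (le_of_lt hC1)
      · rw [div_le_one hC1]; linarith
    · constructor <;> linarith
    · norm_num
end

section
/- For K = 2 and a feasible placement â, if files n_1 = φ(i_0) and n_2 = φ(i_0+1) satisfy p_{n_1} < p_{n_2} and â_{n_1,1} ≥ â_{n_2,1}, then swapping the l = 1 entries (adjusting the l = 0 entries to keep Σ_l binom(2,l) a_{n,l} = 1) does not increase the averaged lower bound; in particular the key per-case computation gives (p_{n_1}² + 2 p_{n_1} P' )(x₂ − x₁) + 4 p_{n_1} P'' (x₂ − x₁) + (p_{n_2}² + 2 p_{n_2} P')(x₁ − x₂) + 4 p_{n_2} P'' (x₁ − x₂) ≥ 0 when p_{n_1} < p_{n_2} and x₁ ≥ x₂ ≥ 0, where x₁ = â_{n_1,1}, x₂ = â_{n_2,1}, and P', P'' ≥ 0. -/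
/-- The `K = 2` lower bound `R_lb(D;a)` for a demand pair `(d₁,d₂)`. -/
noncomputable def Rlb2 (a : ℕ → ℕ → ℝ) (d₁ d₂ : ℕ) : ℝ :=
  if d₁ = d₂ then a d₁ 0 + a d₁ 1
  else a d₁ 0 + a d₂ 0 + max (a d₁ 1) (a d₂ 1)

/-- The averaged `K = 2` lower bound `R̄_lb(a)` over i.i.d. demands. -/
noncomputable def avgRlb2 (N : ℕ) (p : ℕ → ℝ) (a : ℕ → ℕ → ℝ) : ℝ :=
  ∑ d₁ ∈ Finset.Icc 1 N, ∑ d₂ ∈ Finset.Icc 1 N, p d₁ * p d₂ * Rlb2 a d₁ d₂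

set_option maxHeartbeats 1600000 in
/-- For `K = 2`: if `p_{n₁} < p_{n₂}` while `â_{n₁,1} ≥ â_{n₂,1}`, swapping the `l = 1`
entries of files `n₁, n₂` (adjusting the `l = 0` entries so that
`∑_l C(2,l) a_{n,l}` is preserved) does not increase the averaged lower bound; and the key
per-case computation: `(p₁² + 2p₁P')(x₂−x₁) + 4p₁P''(x₂−x₁) + (p₂² + 2p₂P')(x₁−x₂)
+ 4p₂P''(x₁−x₂) ≥ 0` whenever `p₁ < p₂`, `x₁ ≥ x₂ ≥ 0`, `P', P'' ≥ 0`. -/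
theorem K2_swap_decreases_lb (N : ℕ) (hN : 1 ≤ N) (p : ℕ → ℝ) (hp : ∀ n, 0 ≤ p n)
    (ahat atil : ℕ → ℕ → ℝ) (hahat : ∀ n l, 0 ≤ ahat n l)
    (n₁ n₂ : ℕ) (hn₁ : n₁ ∈ Finset.Icc 1 N) (hn₂ : n₂ ∈ Finset.Icc 1 N) (hne : n₁ ≠ n₂)
    (hp12 : p n₁ < p n₂) (hx : ahat n₂ 1 ≤ ahat n₁ 1)
    (hswap1 : atil n₁ 1 = ahat n₂ 1) (hswap2 : atil n₂ 1 = ahat n₁ 1)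
    (hadj1 : atil n₁ 0 = ahat n₁ 0 + 2 * (ahat n₁ 1 - ahat n₂ 1))
    (hadj2 : atil n₂ 0 = ahat n₂ 0 - 2 * (ahat n₁ 1 - ahat n₂ 1))
    (hfix2a : atil n₁ 2 = ahat n₁ 2) (hfix2b : atil n₂ 2 = ahat n₂ 2)
    (hrest : ∀ n, n ≠ n₁ → n ≠ n₂ → ∀ l, atil n l = ahat n l) :
    avgRlb2 N p atil ≤ avgRlb2 N p ahat
    ∧ ∀ P' P'' : ℝ, 0 ≤ P' → 0 ≤ P'' →
        0 ≤ (p n₁ ^ 2 + 2 * p n₁ * P') * (ahat n₂ 1 - ahat n₁ 1)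
          + 4 * p n₁ * P'' * (ahat n₂ 1 - ahat n₁ 1)
          + (p n₂ ^ 2 + 2 * p n₂ * P') * (ahat n₁ 1 - ahat n₂ 1)
          + 4 * p n₂ * P'' * (ahat n₁ 1 - ahat n₂ 1) := by
  constructor
  · -- main part: the swap does not increase the averaged lower bound
    set I := Finset.Icc 1 N with hI
    set g : ℕ → ℕ → ℝ :=
      fun d₁ d₂ => p d₁ * p d₂ * (Rlb2 atil d₁ d₂ - Rlb2 ahat d₁ d₂) with hg
    have hn₂' : n₂ ∈ I.erase n₁ := Finset.mem_erase.mpr ⟨Ne.symm hne, hn₂⟩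
    set E := (I.erase n₁).erase n₂ with hE
    have hmemE : ∀ m ∈ E, m ≠ n₁ ∧ m ≠ n₂ := by
      intro m hm
      rw [hE, Finset.mem_erase, Finset.mem_erase] at hm
      exact ⟨hm.2.1, hm.1⟩
    have hsplit : ∀ f : ℕ → ℝ, ∑ d ∈ I, f d = f n₁ + (f n₂ + ∑ d ∈ E, f d) := by
      intro f
      rw [← Finset.add_sum_erase I f hn₁, ← Finset.add_sum_erase _ f hn₂']
    have hcross0 : ∀ d ∈ E, ∀ m ∈ E, Rlb2 atil d m = Rlb2 ahat d m := by
      intro d hd m hm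
      obtain ⟨hd1, hd2⟩ := hmemE d hd
      obtain ⟨hm1, hm2⟩ := hmemE m hm
      simp [Rlb2, hrest d hd1 hd2, hrest m hm1 hm2]
    rw [← sub_nonpos]
    have hdiff : avgRlb2 N p atil - avgRlb2 N p ahat = ∑ d₁ ∈ I, ∑ d₂ ∈ I, g d₁ d₂ := by
      unfold avgRlb2
      rw [← Finset.sum_sub_distrib]
      refine Finset.sum_congr rfl fun d₁ _ => ?_
      rw [← Finset.sum_sub_distrib]
      refine Finset.sum_congr rfl fun d₂ _ => ?_
      rw [hg]; ring
    rw [hdiff, hsplit (fun d₁ => ∑ d₂ ∈ I, g d₁ d₂)]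
    -- Row for a generic d ∈ E
    have rowA : ∀ d ∈ E, ∑ d₂ ∈ I, g d d₂ ≤ 0 := by
      intro d hd
      obtain ⟨hd1, hd2⟩ := hmemE d hd
      rw [hsplit (fun d₂ => g d d₂)]
      have hEzero : ∑ m ∈ E, g d m = 0 := by
        refine Finset.sum_eq_zero fun m hm => ?_
        rw [hg]; simp [hcross0 d hd m hm]
      rw [hEzero, add_zero]
      have e1 : Rlb2 atil d n₁ - Rlb2 ahat d n₁
          = 2 * (ahat n₁ 1 - ahat n₂ 1) + max (ahat d 1) (ahat n₂ 1)
            - max (ahat d 1) (ahat n₁ 1) := by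
        simp only [Rlb2, if_neg hd1, hrest d hd1 hd2, hadj1, hswap1]
        ring
      have e2 : Rlb2 atil d n₂ - Rlb2 ahat d n₂
          = -(2 * (ahat n₁ 1 - ahat n₂ 1)) + max (ahat d 1) (ahat n₁ 1)
            - max (ahat d 1) (ahat n₂ 1) := by
        simp only [Rlb2, if_neg hd2, hrest d hd1 hd2, hadj2, hswap2]
        ring
      rw [hg]
      simp only []
      rw [e1, e2]
      have hM1 : max (ahat d 1) (ahat n₂ 1) ≤ max (ahat d 1) (ahat n₁ 1) :=
        max_le_max le_rfl hx
      have hM2 : max (ahat d 1) (ahat n₁ 1)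
          ≤ max (ahat d 1) (ahat n₂ 1) + (ahat n₁ 1 - ahat n₂ 1) := by
        rcases le_total (ahat d 1) (ahat n₁ 1) with h | h
        · rw [max_eq_right h]; nlinarith [le_max_right (ahat d 1) (ahat n₂ 1)]
        · rw [max_eq_left h]; nlinarith [le_max_left (ahat d 1) (ahat n₂ 1), hx]
      nlinarith [mul_nonneg (mul_nonneg (hp d) (sub_nonneg.mpr hp12.le))
        (by nlinarith [hM2, hx] :
          (0:ℝ) ≤ 2 * (ahat n₁ 1 - ahat n₂ 1)
            - (max (ahat d 1) (ahat n₁ 1) - max (ahat d 1) (ahat n₂ 1)))]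
    -- Rows n₁ and n₂ combined
    have rowB : (∑ d₂ ∈ I, g n₁ d₂) + (∑ d₂ ∈ I, g n₂ d₂) ≤ 0 := by
      rw [hsplit (fun d₂ => g n₁ d₂), hsplit (fun d₂ => g n₂ d₂)]
      have d11 : Rlb2 atil n₁ n₁ - Rlb2 ahat n₁ n₁ = ahat n₁ 1 - ahat n₂ 1 := by
        simp only [Rlb2, if_pos rfl, if_true, eq_self_iff_true, hadj1, hswap1]; ring
      have d22 : Rlb2 atil n₂ n₂ - Rlb2 ahat n₂ n₂ = -(ahat n₁ 1 - ahat n₂ 1) := by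
        simp only [Rlb2, if_pos rfl, if_true, eq_self_iff_true, hadj2, hswap2]; ring
      have d12 : Rlb2 atil n₁ n₂ - Rlb2 ahat n₁ n₂ = 0 := by
        simp only [Rlb2, if_neg hne, hadj1, hadj2, hswap1, hswap2]
        rw [max_comm]; ring
      have d21 : Rlb2 atil n₂ n₁ - Rlb2 ahat n₂ n₁ = 0 := by
        simp only [Rlb2, if_neg (Ne.symm hne), hadj1, hadj2, hswap1, hswap2]
        rw [max_comm]; ring
      have hsumE : (∑ m ∈ E, g n₁ m) + (∑ m ∈ E, g n₂ m)
          = ∑ m ∈ E, (g n₁ m + g n₂ m) := (Finset.sum_add_distrib).symm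
      have hEle : ∑ m ∈ E, (g n₁ m + g n₂ m) ≤ 0 := by
        refine Finset.sum_nonpos fun m hm => ?_
        obtain ⟨hm1, hm2⟩ := hmemE m hm
        have e1 : Rlb2 atil n₁ m - Rlb2 ahat n₁ m
            = 2 * (ahat n₁ 1 - ahat n₂ 1) + max (ahat n₂ 1) (ahat m 1)
              - max (ahat n₁ 1) (ahat m 1) := by
          simp only [Rlb2, if_neg (Ne.symm hm1), hrest m hm1 hm2, hadj1, hswap1]
          ring
        have e2 : Rlb2 atil n₂ m - Rlb2 ahat n₂ m
            = -(2 * (ahat n₁ 1 - ahat n₂ 1)) + max (ahat n₁ 1) (ahat m 1)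
              - max (ahat n₂ 1) (ahat m 1) := by
          simp only [Rlb2, if_neg (Ne.symm hm2), hrest m hm1 hm2, hadj2, hswap2]
          ring
        rw [hg]
        simp only []
        rw [e1, e2]
        have hM1 : max (ahat n₂ 1) (ahat m 1) ≤ max (ahat n₁ 1) (ahat m 1) :=
          max_le_max hx le_rfl
        have hM2 : max (ahat n₁ 1) (ahat m 1)
            ≤ max (ahat n₂ 1) (ahat m 1) + (ahat n₁ 1 - ahat n₂ 1) := by
          rcases le_total (ahat n₁ 1) (ahat m 1) with h | h
          · rw [max_eq_right h]; nlinarith [le_max_right (ahat n₂ 1) (ahat m 1)]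
          · rw [max_eq_left h]; nlinarith [le_max_left (ahat n₂ 1) (ahat m 1), hx]
        nlinarith [mul_nonneg (mul_nonneg (hp m) (sub_nonneg.mpr hp12.le))
          (by nlinarith [hM2, hx] :
            (0:ℝ) ≤ 2 * (ahat n₁ 1 - ahat n₂ 1)
              - (max (ahat n₁ 1) (ahat m 1) - max (ahat n₂ 1) (ahat m 1)))]
      have hg1 : g n₁ n₁ = p n₁ * p n₁ * (ahat n₁ 1 - ahat n₂ 1) := by
        rw [hg]; simp only []; rw [d11]
      have hg2 : g n₂ n₂ = p n₂ * p n₂ * (-(ahat n₁ 1 - ahat n₂ 1)) := by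
        rw [hg]; simp only []; rw [d22]
      have hg3 : g n₁ n₂ = 0 := by rw [hg]; simp only []; rw [d12]; ring
      have hg4 : g n₂ n₁ = 0 := by rw [hg]; simp only []; rw [d21]; ring
      have hdiag : p n₁ * p n₁ * (ahat n₁ 1 - ahat n₂ 1)
          + p n₂ * p n₂ * (-(ahat n₁ 1 - ahat n₂ 1)) ≤ 0 := by
        nlinarith [mul_nonneg (add_nonneg (hp n₁) (hp n₂)) (sub_nonneg.mpr hx),
          sub_nonneg.mpr hp12.le, hx]
      rw [hg1, hg2, hg3, hg4]
      linarith [hEle, hsumE, hdiag]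
    have hErows : ∑ d ∈ E, (∑ d₂ ∈ I, g d d₂) ≤ 0 :=
      Finset.sum_nonpos rowA
    linarith [rowB, hErows]
  · -- key per-case computation
    intro P' P'' hP' hP''
    nlinarith [mul_nonneg (sub_nonneg.mpr hx) (mul_nonneg (sub_nonneg.mpr hp12.le) hP'),
      mul_nonneg (sub_nonneg.mpr hx) (mul_nonneg (sub_nonneg.mpr hp12.le) hP''),
      mul_nonneg (sub_nonneg.mpr hx)
        (mul_nonneg (add_nonneg (hp n₁) (hp n₂)) (sub_nonneg.mpr hp12.le))]
end

section
/- For K = 2 with files of possibly different sizes, for every demand vector d and any nonnegative placement a, the MCCS rate equals the uncoded-placement lower bound: if d_1 = d_2 = n then both equal a_{n,0} + a_{n,1}; if d_1 ≠ d_2 then both equal a_{d_1,0} + a_{d_2,0} + max(a_{d_1,1}, a_{d_2,1}). -/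
/-- The `K = 2` MCCS delivery rate: sum over user subsets of `{1,2}` intersecting the leader
group `U` of the zero-padded message sizes `max_{k∈S} a_{d_k,|S|−1}`. -/
noncomputable def RmccsTwo (a : ℕ → ℕ → ℝ) (d : ℕ → ℕ) (U : Finset ℕ) : ℝ :=
  ∑ S ∈ ((Finset.Icc 1 2).powerset.filter (fun S => (S ∩ U).Nonempty)).attach,
    S.1.sup' ((Finset.mem_filter.mp S.2).2.mono Finset.inter_subset_left)
      (fun k => a (d k) (S.1.card - 1))

/-- The `K = 2` uncoded-placement lower bound: maximum over the two orderings of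
`∑_{l=0}^{1} ∑_{i=1}^{|D|} C(2−i,l) a_{π(i),l}`. -/
noncomputable def RlbTwo (a : ℕ → ℕ → ℝ) (d₁ d₂ : ℕ) : ℝ :=
  if d₁ = d₂ then a d₁ 0 + a d₁ 1
  else max (a d₁ 0 + a d₂ 0 + a d₁ 1) (a d₁ 0 + a d₂ 0 + a d₂ 1)

lemma rm_eq (a : ℕ → ℕ → ℝ) (d : ℕ → ℕ) (U : Finset ℕ) :
    RmccsTwo a d U = ∑ S ∈ ((Finset.Icc 1 2).powerset.filter (fun S => (S ∩ U).Nonempty)),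
      (if h : S.Nonempty then S.sup' h (fun k => a (d k) (S.card - 1)) else 0) := by
  rw [RmccsTwo]
  rw [← Finset.sum_attach ((Finset.Icc 1 2).powerset.filter (fun S => (S ∩ U).Nonempty))
      (fun S => if h : S.Nonempty then S.sup' h (fun k => a (d k) (S.card - 1)) else 0)]
  apply Finset.sum_congr rfl
  intro S _
  rw [dif_pos ((Finset.mem_filter.mp S.2).2.mono Finset.inter_subset_left)]

lemma sup'_pair (f : ℕ → ℝ) (h : ({1, 2} : Finset ℕ).Nonempty) :
    ({1, 2} : Finset ℕ).sup' h f = max (f 1) (f 2) := by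
  rw [Finset.sup'_insert (Finset.singleton_nonempty 2), Finset.sup'_singleton]

/-- For `K = 2` users with files of possibly different sizes `F_n`, for every demand vector
and any nonnegative placement, the MCCS rate equals the uncoded-placement lower bound:
if `d₁ = d₂ = n` both equal `a_{n,0} + a_{n,1}`; if `d₁ ≠ d₂` both equal
`a_{d₁,0} + a_{d₂,0} + max(a_{d₁,1}, a_{d₂,1})`. -/
theorem K2_nonuniform_size_rate_eq_lb (N : ℕ) (hN : 1 ≤ N) (F : ℕ → ℝ)
    (a : ℕ → ℕ → ℝ) (ha : ∀ n l, 0 ≤ a n l)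
    (hpart : ∀ n ∈ Finset.Icc 1 N,
      ∑ l ∈ Finset.range 3, (Nat.choose 2 l : ℝ) * a n l = F n)
    (d₁ d₂ : ℕ) (hd₁ : d₁ ∈ Finset.Icc 1 N) (hd₂ : d₂ ∈ Finset.Icc 1 N) :
    (d₁ = d₂ →
      RmccsTwo a (fun k => if k = 1 then d₁ else d₂) {1} = a d₁ 0 + a d₁ 1
      ∧ RlbTwo a d₁ d₂ = a d₁ 0 + a d₁ 1)
    ∧ (d₁ ≠ d₂ →
      RmccsTwo a (fun k => if k = 1 then d₁ else d₂) (Finset.Icc 1 2)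
          = a d₁ 0 + a d₂ 0 + max (a d₁ 1) (a d₂ 1)
      ∧ RlbTwo a d₁ d₂ = a d₁ 0 + a d₂ 0 + max (a d₁ 1) (a d₂ 1)) := by
  constructor
  · intro hdd
    constructor
    · rw [rm_eq,
        show ((Finset.Icc 1 2).powerset.filter (fun S => (S ∩ ({1} : Finset ℕ)).Nonempty))
          = {{1}, {1, 2}} by decide]
      rw [Finset.sum_insert (by decide), Finset.sum_singleton]
      rw [dif_pos (by decide : ({1} : Finset ℕ).Nonempty),
        dif_pos (by decide : ({1, 2} : Finset ℕ).Nonempty)]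
      rw [Finset.sup'_singleton, sup'_pair]
      simp [hdd]
    · simp [RlbTwo, hdd]
  · intro hdd
    constructor
    · rw [rm_eq,
        show ((Finset.Icc 1 2).powerset.filter
            (fun S => (S ∩ (Finset.Icc 1 2 : Finset ℕ)).Nonempty))
          = {{1}, {2}, {1, 2}} by decide]
      rw [Finset.sum_insert (by decide), Finset.sum_insert (by decide), Finset.sum_singleton]
      rw [dif_pos (by decide : ({1} : Finset ℕ).Nonempty),
        dif_pos (by decide : ({2} : Finset ℕ).Nonempty),
        dif_pos (by decide : ({1, 2} : Finset ℕ).Nonempty)]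
      rw [Finset.sup'_singleton, Finset.sup'_singleton, sup'_pair]
      norm_num
      ring
    · rw [RlbTwo, if_neg hdd]
      rcases le_total (a d₁ 1) (a d₂ 1) with h | h
      · rw [max_eq_right h, max_eq_right (by linarith)]
      · rw [max_eq_left h, max_eq_left (by linarith)]
end
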